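/- There exists a function f : ℕ → ℕ such that for every natural number n the following holds: if G is a finite group such that for every element x of G either the centralizer C_G(x) has order at most n or the index [G : C_G(x)] is at most n, then there is a characteristic subgroup H of G such that the quotient G/H has order at most f(n) and the derived subgroup H' has order at most f(n). -/

import Mathlib

open Subgroup Finset
open scoped commutatorElement

variable {G : Type*} [Group G]

private lemma comm_eq (x y : G) : ⁅x, y⁆ = (x * y) * (y * x)⁻¹ := by
  rw [commutatorElement_def]; group

private lemma comm_shift {a b u v : G} (hau : a * u = u * a) (hbu : b * u = u * b)
    (hav : a * v = v * a) (hbv : b * v = v * b) (huv : u * v = v * u) :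
    ⁅a * u, b * v⁆ = ⁅a, b⁆ := by
  have k1 : (a * u) * (b * v) = (a * b) * (u * v) := by
    calc (a * u) * (b * v) = a * (u * b) * v := by group
    _ = a * (b * u) * v := by rw [hbu]
    _ = (a * b) * (u * v) := by group
  have k2 : (b * v) * (a * u) = (b * a) * (u * v) := by
    calc (b * v) * (a * u) = b * (v * a) * u := by group
    _ = b * (a * v) * u := by rw [hav]
    _ = (b * a) * (v * u) := by group
    _ = (b * a) * (u * v) := by rw [huv]
  rw [comm_eq, comm_eq a b, k1, k2, mul_inv_rev (b*a) (u*v)]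
  group

/-- In a finite group in which every centralizer has index at most `n`,
there are at most `n ^ 5` commutators. -/
lemma card_commutatorSet_le_of_index_centralizer_le [Finite G] {n : ℕ}
    (h : ∀ x : G, (centralizer ({x} : Set G)).index ≤ n) :
    Nat.card (commutatorSet G) ≤ n ^ 5 := by
  classical
  cases nonempty_fintype G
  set N := Nat.card G with hN
  have hNpos : 0 < N := Nat.card_pos
  -- centralizer intersections are large
  have hinter2 : ∀ a b : G, N ≤ n ^ 2 * Nat.card (centralizer ({a} : Set G) ⊓ centralizer ({b} : Set G) : Subgroup G) := by
    intro a b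
    have h1 : (centralizer ({a} : Set G) ⊓ centralizer ({b} : Set G)).index ≤ n * n :=
      index_inf_le.trans (Nat.mul_le_mul (h a) (h b))
    calc N = (centralizer ({a} : Set G) ⊓ centralizer ({b} : Set G)).index *
        Nat.card (centralizer ({a} : Set G) ⊓ centralizer ({b} : Set G) : Subgroup G) :=
        (index_mul_card _).symm
    _ ≤ (n * n) * Nat.card (centralizer ({a} : Set G) ⊓ centralizer ({b} : Set G) : Subgroup G) :=
        Nat.mul_le_mul_right _ h1
    _ = n ^ 2 * _ := by ring_nf
  have hinter3 : ∀ a b u : G, N ≤ n ^ 3 *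
      Nat.card ((centralizer ({a} : Set G) ⊓ centralizer ({b} : Set G)) ⊓ centralizer ({u} : Set G) : Subgroup G) := by
    intro a b u
    have h1 : ((centralizer ({a} : Set G) ⊓ centralizer ({b} : Set G)) ⊓ centralizer ({u} : Set G)).index ≤ n * n * n :=
      index_inf_le.trans (Nat.mul_le_mul (index_inf_le.trans (Nat.mul_le_mul (h a) (h b))) (h u))
    calc N = _ * Nat.card ((centralizer ({a} : Set G) ⊓ centralizer ({b} : Set G)) ⊓ centralizer ({u} : Set G) : Subgroup G) := (index_mul_card _).symm
    _ ≤ (n * n * n) * _ := Nat.mul_le_mul_right _ h1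
    _ = n ^ 3 * _ := by ring_nf
  -- Finset versions
  let CS : Finset G := Set.toFinset (commutatorSet G)
  have hCScard : Nat.card (commutatorSet G) = CS.card := by
    rw [Nat.card_eq_fintype_card]
    exact (Set.toFinset_card _).symm
  rw [hCScard]
  have hmaps : ∀ p : G × G, p ∈ (univ : Finset (G × G)) → ⁅p.1, p.2⁆ ∈ CS := by
    intro p _
    exact Set.mem_toFinset.mpr ⟨p.1, p.2, rfl⟩
  have hfibersum : (univ : Finset (G × G)).card =
      ∑ c ∈ CS, ((univ : Finset (G × G)).filter (fun p => ⁅p.1, p.2⁆ = c)).card :=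
    Finset.card_eq_sum_card_fiberwise hmaps
  have huniv : (univ : Finset (G × G)).card = N * N := by
    simp [hN, Nat.card_eq_fintype_card, Fintype.card_prod]
  -- each fiber is large
  have fiber_large : ∀ c ∈ CS,
      N * N ≤ n ^ 5 * ((univ : Finset (G × G)).filter (fun p => ⁅p.1, p.2⁆ = c)).card := by
    intro c hc
    obtain ⟨a, b, hab⟩ : c ∈ commutatorSet G := by simpa [CS, Set.mem_toFinset] using hc
    set D : Subgroup G := centralizer ({a} : Set G) ⊓ centralizer ({b} : Set G) with hDdef
    let Dfin : Finset G := Set.toFinset (D : Set G)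
    have hDcard : Nat.card D = Dfin.card := by
      simp [Dfin, Nat.card_eq_fintype_card, Set.toFinset_card]
    let W : Finset (G × G) := (Dfin ×ˢ Dfin).filter (fun p => p.1 * p.2 = p.2 * p.1)
    have hmemD : ∀ x : G, x ∈ Dfin ↔ (x * a = a * x ∧ x * b = b * x) := by
      intro x
      simp [Dfin, hDdef, Set.mem_toFinset, Subgroup.mem_inf, mem_centralizer_singleton_iff]
    -- W injects into the fiber
    have hWfiber : W.card ≤ ((univ : Finset (G × G)).filter (fun p => ⁅p.1, p.2⁆ = c)).card := by
      apply Finset.card_le_card_of_injOn (fun p => (a * p.1, b * p.2))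
      · intro p hp
        simp only [W, Finset.mem_coe, Finset.mem_filter, Finset.mem_product] at hp
        obtain ⟨⟨h1, h2⟩, h3⟩ := hp
        rw [hmemD] at h1 h2
        simp only [Finset.mem_coe, Finset.mem_filter, Finset.mem_univ, true_and]
        rw [comm_shift h1.1.symm h1.2.symm h2.1.symm h2.2.symm h3, hab]
      · intro p _ q _ hpq
        simp only [Prod.mk.injEq, Prod.ext_iff] at hpq ⊢
        exact ⟨mul_left_cancel hpq.1, mul_left_cancel hpq.2⟩
    -- W is large
    have stepC : ∀ u ∈ Dfin, N ≤ n ^ 3 * (W.filter (fun p => p.1 = u)).card := by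
      intro u hu
      set E : Subgroup G := D ⊓ centralizer ({u} : Set G) with hEdef
      let Efin : Finset G := Set.toFinset (E : Set G)
      have hEcard : Nat.card E = Efin.card := by
        simp [Efin, Nat.card_eq_fintype_card, Set.toFinset_card]
      have hEW : Efin.card ≤ (W.filter (fun p => p.1 = u)).card := by
        apply Finset.card_le_card_of_injOn (fun v => (u, v))
        · intro v hv
          simp only [Efin, hEdef, Set.mem_toFinset, SetLike.mem_coe, Subgroup.mem_inf] at hv
          have huv : u * v = v * u := ((mem_centralizer_singleton_iff).mp hv.2).symm
          refine Finset.mem_filter.mpr ⟨Finset.mem_filter.mpr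
            ⟨Finset.mem_product.mpr ⟨hu, ?_⟩, huv⟩, rfl⟩
          exact Set.mem_toFinset.mpr hv.1
        · intro v _ w _ hvw
          simpa using congrArg Prod.snd hvw
      calc N ≤ n ^ 3 * Nat.card E := hinter3 a b u
      _ = n ^ 3 * Efin.card := by rw [hEcard]
      _ ≤ n ^ 3 * (W.filter (fun p => p.1 = u)).card := Nat.mul_le_mul_left _ hEW
    have stepD : W.card = ∑ u ∈ Dfin, (W.filter (fun p => p.1 = u)).card := by
      apply Finset.card_eq_sum_card_fiberwise
      intro p hp
      simp only [W, Finset.mem_coe, Finset.mem_filter, Finset.mem_product] at hp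
      exact hp.1.1
    have hDlarge : N ≤ n ^ 2 * Dfin.card := by
      calc N ≤ n ^ 2 * Nat.card D := hinter2 a b
      _ = n ^ 2 * Dfin.card := by rw [hDcard]
    have hWlarge : Dfin.card * N ≤ n ^ 3 * W.card := by
      calc Dfin.card * N = ∑ _u ∈ Dfin, N := by rw [Finset.sum_const, smul_eq_mul]
      _ ≤ ∑ u ∈ Dfin, n ^ 3 * (W.filter (fun p => p.1 = u)).card := Finset.sum_le_sum stepC
      _ = n ^ 3 * ∑ u ∈ Dfin, (W.filter (fun p => p.1 = u)).card := by rw [Finset.mul_sum]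
      _ = n ^ 3 * W.card := by rw [← stepD]
    calc N * N ≤ (n ^ 2 * Dfin.card) * N := Nat.mul_le_mul_right _ hDlarge
    _ = n ^ 2 * (Dfin.card * N) := by ring
    _ ≤ n ^ 2 * (n ^ 3 * W.card) := Nat.mul_le_mul_left _ hWlarge
    _ = n ^ 5 * W.card := by ring
    _ ≤ n ^ 5 * ((univ : Finset (G × G)).filter (fun p => ⁅p.1, p.2⁆ = c)).card :=
        Nat.mul_le_mul_left _ hWfiber
  -- conclude
  have key : CS.card * (N * N) ≤ n ^ 5 * (N * N) := by
    calc CS.card * (N * N) = ∑ _c ∈ CS, N * N := by rw [Finset.sum_const, smul_eq_mul]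
    _ ≤ ∑ c ∈ CS, n ^ 5 * ((univ : Finset (G × G)).filter (fun p => ⁅p.1, p.2⁆ = c)).card :=
        Finset.sum_le_sum fiber_large
    _ = n ^ 5 * ∑ c ∈ CS, ((univ : Finset (G × G)).filter (fun p => ⁅p.1, p.2⁆ = c)).card := by
        rw [Finset.mul_sum]
    _ = n ^ 5 * (univ : Finset (G × G)).card := by rw [← hfibersum]
    _ = n ^ 5 * (N * N) := by rw [huniv]
  exact Nat.le_of_mul_le_mul_right key (Nat.mul_pos hNpos hNpos)

lemma cardCommutatorBound_mono : Monotone Subgroup.cardCommutatorBound := by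
  intro k m hkm
  unfold Subgroup.cardCommutatorBound
  rcases Nat.eq_zero_or_pos k with rfl | hk
  · simp only [pow_zero, Nat.mul_zero, Nat.zero_mul, one_pow]
    rcases Nat.eq_zero_or_pos m with rfl | hm
    · simp
    · exact Nat.one_le_pow _ _ (Nat.pow_pos hm)
  · have hm : 1 ≤ m := hk.trans_le hkm
    have hbase : k ^ (2 * k) ≤ m ^ (2 * m) :=
      (Nat.pow_le_pow_left hkm _).trans (Nat.pow_le_pow_right hm (by omega))
    have hexp : k ^ (2 * k + 1) + 1 ≤ m ^ (2 * m + 1) + 1 := by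
      have := (Nat.pow_le_pow_left hkm (2 * k + 1)).trans
        (Nat.pow_le_pow_right hm (by omega : 2 * k + 1 ≤ 2 * m + 1))
      omega
    calc (k ^ (2 * k)) ^ (k ^ (2 * k + 1) + 1) ≤ (m ^ (2 * m)) ^ (k ^ (2 * k + 1) + 1) :=
          Nat.pow_le_pow_left hbase _
    _ ≤ (m ^ (2 * m)) ^ (m ^ (2 * m + 1) + 1) :=
          Nat.pow_le_pow_right (Nat.one_le_pow _ _ (hk.trans_le hkm)) hexp

/-- Quantitative Neumann BFC theorem. -/
lemma card_commutator_le_of_index_centralizer_le [Finite G] {n : ℕ}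
    (h : ∀ x : G, (centralizer ({x} : Set G)).index ≤ n) :
    Nat.card (_root_.commutator G) ≤ Subgroup.cardCommutatorBound (n ^ 5) :=
  (Subgroup.card_commutator_le_of_finite_commutatorSet G).trans
    (cardCommutatorBound_mono (card_commutatorSet_le_of_index_centralizer_le h))

/-- A finite group in which every nontrivial element has centralizer of order at most `n`
has order at most `n ^ n`. -/
lemma card_le_pow_of_centralizer_card_le {Q : Type*} [Group Q] [Finite Q] {n : ℕ} (hn : 1 ≤ n)
    (h : ∀ q : Q, q ≠ 1 → Nat.card (centralizer ({q} : Set Q)) ≤ n) :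
    Nat.card Q ≤ n ^ n := by
  have hQ0 : Nat.card Q ≠ 0 := Nat.card_pos.ne'
  have hsyl : ∀ (p : ℕ) (_ : p.Prime) (P : Sylow p Q), Nat.card P ≤ n := by
    intro p hp P
    haveI := Fact.mk hp
    rcases eq_or_ne (Nat.card (P : Subgroup Q)) 1 with h1 | h1
    · exact h1.le.trans hn
    · have hnt : Nontrivial ↥(P : Subgroup Q) := by
        have hpos : 0 < Nat.card ↥(P : Subgroup Q) := Nat.card_pos
        exact Finite.one_lt_card_iff_nontrivial.mp (by omega)
      have hcent := P.isPGroup'.center_nontrivial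
      obtain ⟨z, hz⟩ := exists_ne (1 : Subgroup.center ↥(P : Subgroup Q))
      set zq : Q := ((z : ↥(P : Subgroup Q)) : Q) with hzq
      have hzq1 : zq ≠ 1 := by
        simp only [hzq, ne_eq, OneMemClass.coe_eq_one]
        exact fun hc => hz (Subtype.ext (Subtype.ext (by
          simpa using congrArg (Subtype.val) hc)))
      have hle : (P : Subgroup Q) ≤ centralizer {zq} := by
        intro g hg
        rw [mem_centralizer_singleton_iff]
        exact congrArg Subtype.val ((Subgroup.mem_center_iff.mp z.2) ⟨g, hg⟩)
      exact (Subgroup.card_le_of_le hle).trans (h zq hzq1)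
  have key : ∀ p ∈ (Nat.card Q).primeFactors, p ^ (Nat.card Q).factorization p ≤ n := by
    intro p hp
    have hpp := Nat.prime_of_mem_primeFactors hp
    haveI := Fact.mk hpp
    obtain ⟨P⟩ : Nonempty (Sylow p Q) := inferInstance
    calc p ^ (Nat.card Q).factorization p = Nat.card P := (Sylow.card_eq_multiplicity P).symm
    _ ≤ n := hsyl p hpp P
  have hsub : (Nat.card Q).primeFactors ⊆ Finset.Icc 2 n := by
    intro p hp
    have hpp := Nat.prime_of_mem_primeFactors hp
    refine Finset.mem_Icc.mpr ⟨hpp.two_le, ?_⟩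
    have hf0 : (Nat.card Q).factorization p ≠ 0 := by
      rw [← Nat.support_factorization] at hp
      exact Finsupp.mem_support_iff.mp hp
    exact (Nat.le_self_pow hf0 p).trans (key p hp)
  calc Nat.card Q = ∏ p ∈ (Nat.card Q).primeFactors, p ^ (Nat.card Q).factorization p := by
        conv_lhs => rw [← Nat.factorization_prod_pow_eq_self hQ0]
        rw [Finsupp.prod, Nat.support_factorization]
  _ ≤ ∏ _p ∈ (Nat.card Q).primeFactors, n := Finset.prod_le_prod' key
  _ = n ^ (Nat.card Q).primeFactors.card := Finset.prod_const n
  _ ≤ n ^ n := Nat.pow_le_pow_right hn (le_trans (Finset.card_le_card hsub) (by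
        rw [Nat.card_Icc]; omega))

theorem finite_group_restricted_centralizers_finiteByAbelianByFinite :
    ∃ f : ℕ → ℕ, ∀ n : ℕ, ∀ (G : Type) [Group G] [Finite G],
      (∀ x : G, Nat.card (Subgroup.centralizer ({x} : Set G)) ≤ n ∨
        (Subgroup.centralizer ({x} : Set G)).index ≤ n) →
      ∃ H : Subgroup G, H.Characteristic ∧ H.index ≤ f n ∧
        Nat.card ↥⁅H, H⁆ ≤ f n := by
  refine ⟨fun n => Subgroup.cardCommutatorBound (n ^ 5) + n ^ n + n ^ 3 + 1, ?_⟩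
  intro n G _ _ hyp
  beta_reduce
  by_cases hA : ∀ x : G, (centralizer ({x} : Set G)).index ≤ n
  · refine ⟨⊤, inferInstance, ?_, ?_⟩
    · rw [Subgroup.index_top]; omega
    · have h1 := card_commutator_le_of_index_centralizer_le hA
      have h2 : (⁅(⊤ : Subgroup G), (⊤ : Subgroup G)⁆ : Subgroup G) = _root_.commutator G := rfl
      rw [h2]
      omega
  · push_neg at hA
    obtain ⟨x₀, hx₀⟩ := hA
    have hcard₀ : Nat.card (centralizer ({x₀} : Set G)) ≤ n := (hyp x₀).resolve_right hx₀.not_ge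
    have hn1 : 1 ≤ n := le_trans Nat.card_pos hcard₀
    by_cases hsmall : Nat.card G ≤ n ^ 3
    · refine ⟨⊥, inferInstance, ?_, ?_⟩
      · rw [Subgroup.index_bot]; omega
      · rw [Subgroup.commutator_bot_left, Subgroup.card_bot]; omega
    · push_neg at hsmall
      -- the characteristic subgroup of elements with small centralizer index
      have hposidx : ∀ {H : Type} [Group H] [Finite H] (J : Subgroup H), 0 < J.index :=
        fun {H} _ _ J => Nat.pos_of_ne_zero Subgroup.index_ne_zero_of_finite
      have hmul : ∀ x y : G, (centralizer ({x} : Set G)).index ≤ n →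
          (centralizer ({y} : Set G)).index ≤ n →
          (centralizer ({x * y} : Set G)).index ≤ n := by
        intro x y hx hy
        by_contra hxy
        have hcxy : Nat.card (centralizer ({x * y} : Set G)) ≤ n :=
          (hyp _).resolve_right hxy
        have hle : centralizer ({x} : Set G) ⊓ centralizer ({y} : Set G) ≤
            centralizer ({x * y} : Set G) := by
          intro g hg
          rw [Subgroup.mem_inf, mem_centralizer_singleton_iff,
            mem_centralizer_singleton_iff] at hg
          rw [mem_centralizer_singleton_iff]
          calc g * (x * y) = (g * x) * y := by rw [mul_assoc]
          _ = x * (g * y) := by rw [hg.1, mul_assoc]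
          _ = (x * y) * g := by rw [hg.2, mul_assoc]
        have h1 : (centralizer ({x * y} : Set G)).index ≤
            (centralizer ({x} : Set G) ⊓ centralizer ({y} : Set G)).index :=
          Nat.le_of_dvd (hposidx _) (Subgroup.index_dvd_of_le hle)
        have h2 := h1.trans (index_inf_le.trans (Nat.mul_le_mul hx hy))
        have h3 : Nat.card G ≤ n ^ 3 := by
          calc Nat.card G = (centralizer ({x * y} : Set G)).index *
              Nat.card (centralizer ({x * y} : Set G)) := (index_mul_card _).symm
          _ ≤ (n * n) * n := Nat.mul_le_mul h2 hcxy
          _ = n ^ 3 := by ring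
        omega
      let K : Subgroup G :=
        { carrier := {x : G | (centralizer ({x} : Set G)).index ≤ n}
          one_mem' := by
            have h1 : centralizer ({(1 : G)} : Set G) = ⊤ := by
              ext g; simp [mem_centralizer_singleton_iff]
            simp only [Set.mem_setOf_eq, h1, Subgroup.index_top]; omega
          mul_mem' := fun {x y} hx hy => hmul x y hx hy
          inv_mem' := by
            intro x hx
            have h1 : centralizer ({x⁻¹} : Set G) = centralizer ({x} : Set G) := by
              ext g
              simp only [mem_centralizer_singleton_iff]
              exact ⟨fun hg => ((Commute.inv_left_iff).mp hg.symm).symm,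
                fun hg => ((Commute.inv_left_iff).mpr hg.symm).symm⟩
            simpa only [Set.mem_setOf_eq, h1] using hx }
      have hmemK : ∀ y : G, y ∈ K ↔ (centralizer ({y} : Set G)).index ≤ n := fun y => Iff.rfl
      have hKchar : K.Characteristic := by
        rw [Subgroup.characteristic_iff_comap_eq]
        intro φ
        ext x
        have hc : centralizer ({x} : Set G) =
            (centralizer ({φ x} : Set G)).comap φ.toMonoidHom := by
          ext g
          simp only [Subgroup.mem_comap, mem_centralizer_singleton_iff]
          constructor
          · intro hg
            show φ.toMonoidHom g * φ.toMonoidHom x = φ.toMonoidHom x * φ.toMonoidHom g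
            rw [← map_mul, ← map_mul, hg]
          · intro hg
            have := congrArg φ.symm (show φ.toMonoidHom (g * x) = φ.toMonoidHom (x * g) by
              rw [map_mul, map_mul]; exact hg)
            simpa using this
        have hidx : (centralizer ({x} : Set G)).index = (centralizer ({φ x} : Set G)).index := by
          rw [hc, Subgroup.index_comap_of_surjective _ φ.surjective]
        rw [Subgroup.mem_comap, hmemK, hmemK, hidx]
        exact Iff.rfl
      refine ⟨K, hKchar, ?_, ?_⟩
      · -- index bound
        haveI := hKchar
        have hQcent : ∀ q : G ⧸ K, q ≠ 1 →
            Nat.card (centralizer ({q} : Set (G ⧸ K))) ≤ n := by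
          intro q hq
          obtain ⟨x, rfl⟩ := QuotientGroup.mk'_surjective K q
          have hxK : x ∉ K := fun hx => hq ((QuotientGroup.eq_one_iff x).mpr hx)
          have hxcent : Nat.card (centralizer ({x} : Set G)) ≤ n :=
            (hyp x).resolve_right (fun hc => hxK ((hmemK x).mpr hc))
          set Cq := centralizer ({(QuotientGroup.mk' K) x} : Set (G ⧸ K)) with hCq
          set T := Cq.comap (QuotientGroup.mk' K) with hT
          have hTidx : T.index = Cq.index :=
            Subgroup.index_comap_of_surjective _ (QuotientGroup.mk'_surjective K)
          -- fiber counting : card T ≤ n * card K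
          have hfib : Nat.card ↥T ≤ n * Nat.card ↥K := by
            classical
            cases nonempty_fintype G
            have hTcard : Nat.card ↥T = (Set.toFinset (T : Set G)).card := by
              rw [Nat.card_eq_fintype_card]; exact (Set.toFinset_card _).symm
            have hKcard : Nat.card ↥K = (Set.toFinset (K : Set G)).card := by
              rw [Nat.card_eq_fintype_card]; exact (Set.toFinset_card _).symm
            have hCcard : Nat.card (centralizer ({x} : Set G)) =
                (Set.toFinset ((centralizer ({x} : Set G) : Subgroup G) : Set G)).card := by
              rw [Nat.card_eq_fintype_card]; exact (Set.toFinset_card _).symm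
            rw [hTcard, hKcard]
            apply Finset.card_le_mul_card_image_of_maps_to
              (f := fun g : G => x⁻¹ * g⁻¹ * x * g)
            · intro g hg
              have hgT : g ∈ T := Set.mem_toFinset.mp hg
              rw [hT, Subgroup.mem_comap, hCq, mem_centralizer_singleton_iff] at hgT
              have hquot : ((g * x : G) : G ⧸ K) = ((x * g : G) : G ⧸ K) := by
                have := hgT
                simp only [QuotientGroup.mk'_apply] at this
                rw [QuotientGroup.mk_mul, QuotientGroup.mk_mul, this]
              have hmem : (g * x)⁻¹ * (x * g) ∈ K := QuotientGroup.eq.mp hquot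
              refine Set.mem_toFinset.mpr ?_
              have heq : (g * x)⁻¹ * (x * g) = x⁻¹ * g⁻¹ * x * g := by group
              rw [heq] at hmem
              exact hmem
            · intro b _
              rcases Finset.eq_empty_or_nonempty
                ((Set.toFinset (T : Set G)).filter fun g => x⁻¹ * g⁻¹ * x * g = b) with he | hne
              · simp [he]
              · obtain ⟨h₀, hh₀⟩ := hne
                have hstep : ((Set.toFinset (T : Set G)).filter
                    fun g => x⁻¹ * g⁻¹ * x * g = b).card ≤
                    (Set.toFinset ((centralizer ({x} : Set G) : Subgroup G) : Set G)).card := by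
                  apply Finset.card_le_card_of_injOn (fun g => g * h₀⁻¹)
                  · intro g hg
                    simp only [Finset.mem_coe, Finset.mem_filter] at hg hh₀
                    have heq : x⁻¹ * g⁻¹ * x * g = x⁻¹ * h₀⁻¹ * x * h₀ := by
                      rw [hg.2, hh₀.2]
                    have h2 : g⁻¹ * x * g = h₀⁻¹ * x * h₀ := by
                      have := congrArg (fun t => x * t) heq
                      simpa [mul_assoc] using this
                    refine Set.mem_toFinset.mpr ?_
                    rw [SetLike.mem_coe, mem_centralizer_singleton_iff]
                    have h3 := congrArg (fun t => g * t * h₀⁻¹) h2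
                    simp only [mul_assoc] at h3
                    calc g * h₀⁻¹ * x = g * (h₀⁻¹ * x) := by rw [mul_assoc]
                    _ = g * (h₀⁻¹ * x * h₀ * h₀⁻¹) := by group
                    _ = g * (g⁻¹ * x * g * h₀⁻¹) := by rw [← h2]
                    _ = x * (g * h₀⁻¹) := by group
                  · intro u _ v _ huv
                    exact mul_right_cancel huv
                calc ((Set.toFinset (T : Set G)).filter
                    fun g => x⁻¹ * g⁻¹ * x * g = b).card ≤ _ := hstep
                _ = Nat.card (centralizer ({x} : Set G)) := hCcard.symm
                _ ≤ n := hxcent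
          -- arithmetic
          have e1 : T.index * Nat.card ↥T = Nat.card G := Subgroup.index_mul_card T
          have e2 : Cq.index * Nat.card ↥Cq = Nat.card (G ⧸ K) := Subgroup.index_mul_card Cq
          have e3 : K.index * Nat.card ↥K = Nat.card G := Subgroup.index_mul_card K
          have e4 : K.index = Nat.card (G ⧸ K) := Subgroup.index_eq_card K
          have e5 : Nat.card ↥T = Nat.card ↥Cq * Nat.card ↥K := by
            have h6 : Cq.index * Nat.card ↥T = Cq.index * (Nat.card ↥Cq * Nat.card ↥K) := by
              calc Cq.index * Nat.card ↥T = T.index * Nat.card ↥T := by rw [hTidx]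
              _ = Nat.card G := e1
              _ = K.index * Nat.card ↥K := e3.symm
              _ = Nat.card (G ⧸ K) * Nat.card ↥K := by rw [e4]
              _ = (Cq.index * Nat.card ↥Cq) * Nat.card ↥K := by rw [e2]
              _ = Cq.index * (Nat.card ↥Cq * Nat.card ↥K) := by ring
            exact Nat.eq_of_mul_eq_mul_left (hposidx Cq) h6
          have h7 : Nat.card ↥Cq * Nat.card ↥K ≤ n * Nat.card ↥K := e5 ▸ hfib
          exact Nat.le_of_mul_le_mul_right h7 Nat.card_pos
        have hKindex : K.index ≤ n ^ n := by
          rw [Subgroup.index_eq_card]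
          exact card_le_pow_of_centralizer_card_le hn1 hQcent
        omega
      · -- commutator bound
        have hKbfc : ∀ x : ↥K, (centralizer ({x} : Set ↥K)).index ≤ n := by
          intro x
          have hx : (centralizer ({(x : G)} : Set G)).index ≤ n := (hmemK _).mp x.2
          have hle : (centralizer ({(x : G)} : Set G)).subgroupOf K ≤
              centralizer ({x} : Set ↥K) := by
            intro g hg
            rw [Subgroup.mem_subgroupOf] at hg
            rw [mem_centralizer_singleton_iff] at hg ⊢
            exact Subtype.ext hg
          have h1 : (centralizer ({x} : Set ↥K)).index ≤
              ((centralizer ({(x : G)} : Set G)).subgroupOf K).index :=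
            Nat.le_of_dvd (Nat.pos_of_ne_zero Subgroup.index_ne_zero_of_finite)
              (Subgroup.index_dvd_of_le hle)
          have h3 : (centralizer ({(x : G)} : Set G)).relIndex K ≤
              (centralizer ({(x : G)} : Set G)).index := by
            conv_rhs => rw [← Subgroup.relIndex_top_right]
            exact Subgroup.relIndex_le_of_le_right le_top
              (by rw [Subgroup.relIndex_top_right]; exact Subgroup.index_ne_zero_of_finite)
          exact h1.trans (h3.trans hx)
        have h1 := card_commutator_le_of_index_centralizer_le hKbfc
        have hmapTop : Subgroup.map K.subtype ⊤ = K := by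
          rw [← MonoidHom.range_eq_map, Subgroup.range_subtype]
        have h2 : Subgroup.map K.subtype (_root_.commutator ↥K) = ⁅K, K⁆ := by
          rw [_root_.commutator, Subgroup.map_commutator, hmapTop]
        have h3 : Nat.card ↥⁅K, K⁆ = Nat.card (_root_.commutator ↥K) := by
          rw [← h2]
          exact (Nat.card_congr (Subgroup.equivMapOfInjective (_root_.commutator ↥K)
            K.subtype K.subtype_injective).toEquiv).symm
        omega
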